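/- If k₁+k₂+k₃+k₄ = 0, then the quartic-vertex cochain can be written as a sum of products of star vertices: −v₄ = ((k₁−k₂)·(k₃−k₄))(ξ₁·ξ₂)(ξ₃·ξ₄) + ((k₃−k₁)·(k₂−k₄))(ξ₃·ξ₁)(ξ₂·ξ₄) + ((k₁−k₄)·(k₂−k₃))(ξ₁·ξ₄)(ξ₂·ξ₃). -/

import Mathlib

namespace Stmt7

variable {V : Type*} [AddCommGroup V] [Module ℝ V]

/-- The quartic-vertex cochain `v₄` on four modes. -/
def v₄ (B : LinearMap.BilinForm ℝ V) (m₁ m₂ m₃ m₄ : V × V) : ℝ :=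
  B (m₁.2 + m₂.2) (m₁.2 + m₂.2)
      * (B m₁.1 m₃.1 * B m₂.1 m₄.1 - B m₂.1 m₃.1 * B m₁.1 m₄.1)
    + B (m₂.2 + m₃.2) (m₂.2 + m₃.2)
      * (B m₂.1 m₁.1 * B m₃.1 m₄.1 - B m₃.1 m₁.1 * B m₂.1 m₄.1)
    + B (m₁.2 + m₃.2) (m₁.2 + m₃.2)
      * (B m₁.1 m₄.1 * B m₃.1 m₂.1 - B m₃.1 m₄.1 * B m₁.1 m₂.1)

/-- If `k₁+k₂+k₃+k₄ = 0` then
`−v₄ = ((k₁−k₂)·(k₃−k₄))(ξ₁·ξ₂)(ξ₃·ξ₄) + ((k₃−k₁)·(k₂−k₄))(ξ₃·ξ₁)(ξ₂·ξ₄)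
  + ((k₁−k₄)·(k₂−k₃))(ξ₁·ξ₄)(ξ₂·ξ₃)`. -/
theorem v₄_star_identity (B : LinearMap.BilinForm ℝ V) (hB : B.IsSymm)
    (ξ₁ k₁ ξ₂ k₂ ξ₃ k₃ ξ₄ k₄ : V) (h : k₁ + k₂ + k₃ + k₄ = 0) :
    -v₄ B (ξ₁, k₁) (ξ₂, k₂) (ξ₃, k₃) (ξ₄, k₄)
      = B (k₁ - k₂) (k₃ - k₄) * (B ξ₁ ξ₂ * B ξ₃ ξ₄)
        + B (k₃ - k₁) (k₂ - k₄) * (B ξ₃ ξ₁ * B ξ₂ ξ₄)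
        + B (k₁ - k₄) (k₂ - k₃) * (B ξ₁ ξ₄ * B ξ₂ ξ₃) := by
  have hs : ∀ x y : V, B x y = B y x := by
    intro x y; have := hB.eq x y; simpa using this
  have hk : k₄ = -k₁ - k₂ - k₃ := by
    have : k₄ = -(k₁ + k₂ + k₃) := by
      rw [eq_neg_iff_add_eq_zero, ← h]; abel
    rw [this]; abel
  subst hk
  simp only [v₄, map_add, map_sub, map_neg, LinearMap.add_apply, LinearMap.sub_apply,
    LinearMap.neg_apply]
  rw [hs k₂ k₁, hs k₃ k₁, hs k₃ k₂, hs ξ₂ ξ₁, hs ξ₃ ξ₁, hs ξ₃ ξ₂]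
  ring

end Stmt7
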